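/- Let e1, e2 ∈ {0, 1, …, N−1} with e1 < e2 and suppose e1 + e2 ≡ 1 − N/2 (mod N). For every odd shift τ = 2τ0 + 1 with 0 ≤ τ0 ≤ N−1, the periodic cross-correlation of S^{e1} and S^{e2} satisfies: R_{S^{e1},S^{e2}}(2τ0+1) = −N − N1 if τ0 ≡ −e2 − N/2 or τ0 ≡ −e2 (mod N); and R_{S^{e1},S^{e2}}(2τ0+1) = −2N2 otherwise. -/

import Mathlib

open Finset Module


/-- The geometric sequence of the first type: `t¹ₙ = 1` iff the Legendre symbol of
`Tr(ω^n)` is `-1`, and `0` otherwise (i.e. when the symbol is `0` or `1`). -/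
noncomputable def ntuT1 (p : ℕ) [Fact p.Prime] {F : Type} [Field F]
    [Algebra (ZMod p) F] (ω : F) (n : ℕ) : ZMod 2 :=
  if legendreSym p ((Algebra.trace (ZMod p) F (ω ^ n)).val : ℤ) = -1 then 1 else 0

/-- The geometric sequence of the second type: `t²ₙ = 0` iff the Legendre symbol of
`Tr(ω^n)` is `1`, and `1` otherwise (i.e. when the symbol is `0` or `-1`). -/
noncomputable def ntuT2 (p : ℕ) [Fact p.Prime] {F : Type} [Field F]
    [Algebra (ZMod p) F] (ω : F) (n : ℕ) : ZMod 2 :=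
  if legendreSym p ((Algebra.trace (ZMod p) F (ω ^ n)).val : ℤ) = 1 then 0 else 1

/-- Periodic cross-correlation at shift `τ` of two `N`-periodic binary sequences:
`R_{s,s'}(τ) = Σ_{i=0}^{N-1} (-1)^{s_i + s'_{i+τ}}`, indices taken modulo `N`. -/
def pcorr (N : ℕ) (s s' : ℕ → ZMod 2) (τ : ℤ) : ℤ :=
  ∑ i ∈ Finset.range N, (-1 : ℤ) ^ ((s i + s' ((((i : ℤ) + τ) % (N : ℤ)).toNat)).val)

/-- The interleaved sequence of `t` and the left shift by `e` of `u`: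
`n = 2j ↦ t j`, `n = 2j+1 ↦ u (j + e)`. -/
def ntuInterleave (t u : ℕ → ZMod 2) (e : ℕ) (n : ℕ) : ZMod 2 :=
  if n % 2 = 0 then t (n / 2) else u (n / 2 + e)

namespace S16
open Finset


lemma eps_add (a b : ZMod 2) : (-1:ℤ)^((a+b).val) = (-1:ℤ)^a.val * (-1:ℤ)^b.val := by
  fin_cases a <;> fin_cases b <;> rfl

lemma per_add_mul {α : Type*} {g : ℕ → α} {T : ℕ} (h : ∀ n, g (n + T) = g n) (n k : ℕ) :
    g (n + k * T) = g n := by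
  induction k with
  | zero => simp
  | succ k ih => rw [Nat.succ_mul, ← Nat.add_assoc, h, ih]

lemma per_mod {α : Type*} {g : ℕ → α} {T : ℕ} (h : ∀ n, g (n + T) = g n) (n : ℕ) :
    g n = g (n % T) := by
  conv_lhs => rw [← Nat.mod_add_div' n T]
  exact per_add_mul h _ _

lemma per_sum_shift {g : ℕ → ℤ} {T : ℕ} (h : ∀ n, g (n + T) = g n) (e : ℕ) :
    ∑ j ∈ range T, g (j + e) = ∑ j ∈ range T, g j := by
  induction e with
  | zero => simp
  | succ e ih =>
    have h1 := Finset.sum_range_succ (fun j => g (j + e)) T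
    have h2 := Finset.sum_range_succ' (fun j => g (j + e)) T
    have h3 : g (T + e) = g e := by rw [Nat.add_comm T e, h]
    have h4 : ∀ j : ℕ, j + (e+1) = j + 1 + e := fun j => by omega
    calc ∑ j ∈ range T, g (j + (e+1)) = ∑ j ∈ range T, g (j + 1 + e) := by
          refine Finset.sum_congr rfl fun j _ => by rw [h4]
      _ = ∑ j ∈ range T, g (j + e) := by
          simp only [Nat.zero_add] at h2; linarith
      _ = ∑ j ∈ range T, g j := ih

lemma per_sum_mul {g : ℕ → ℤ} {T : ℕ} (h : ∀ n, g (n + T) = g n) (k : ℕ) :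
    ∑ j ∈ range (k * T), g j = (k:ℤ) * ∑ j ∈ range T, g j := by
  induction k with
  | zero => simp
  | succ k ih =>
    rw [Nat.succ_mul, Finset.sum_range_add, ih]
    have h5 : ∀ i : ℕ, g (k*T + i) = g i := fun i => by
      rw [Nat.add_comm]; exact per_add_mul h i k
    simp only [h5]; push_cast; ring

lemma sum_even_odd (g : ℕ → ℤ) (n : ℕ) :
    ∑ i ∈ range (2 * n), g i = ∑ j ∈ range n, g (2*j) + ∑ j ∈ range n, g (2*j+1) := by
  induction n with
  | zero => simp
  | succ n ih =>
    rw [show 2*(n+1) = 2*n + 1 + 1 by ring, sum_range_succ, sum_range_succ, ih,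
      sum_range_succ (fun j => g (2*j)), sum_range_succ (fun j => g (2*j+1))]
    ring



lemma mem_primeField {p : ℕ} [Fact p.Prime] {F : Type} [Field F] [Fintype F]
    [Algebra (ZMod p) F] {x : F} (hx : x ^ p = x) :
    ∃ a : ZMod p, algebraMap (ZMod p) F a = x := by
  classical
  by_contra hc
  push_neg at hc
  have hp1 : 1 < p := (Fact.out : p.Prime).one_lt
  set f : Polynomial F := Polynomial.X ^ p - Polynomial.X with hf
  have hdeg : f.natDegree = p := by
    rw [hf, Polynomial.natDegree_sub_eq_left_of_natDegree_lt] <;>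
      simp [Polynomial.natDegree_X_pow, Polynomial.natDegree_X, hp1]
  have hf0 : f ≠ 0 := fun h => by simp [h] at hdeg; omega
  have hroot : ∀ y : F, y ^ p = y → y ∈ f.roots.toFinset := by
    intro y hy
    rw [Multiset.mem_toFinset, Polynomial.mem_roots hf0]
    simp [hf, Polynomial.IsRoot, hy]
  set I : Finset F := Finset.image (algebraMap (ZMod p) F) Finset.univ with hI
  have hIcard : I.card = p := by
    rw [hI, Finset.card_image_of_injective _ (algebraMap (ZMod p) F).injective,
      Finset.card_univ, ZMod.card]
  have hIsub : I ⊆ f.roots.toFinset := by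
    intro y hy
    rw [hI, Finset.mem_image] at hy
    obtain ⟨a, -, rfl⟩ := hy
    exact hroot _ (by rw [← map_pow, ZMod.pow_card])
  have hxI : x ∉ I := by
    rw [hI, Finset.mem_image]
    rintro ⟨a, -, ha⟩
    exact hc a ha
  have hsub : insert x I ⊆ f.roots.toFinset := by
    intro y hy
    rcases Finset.mem_insert.mp hy with rfl | hy
    · exact hroot _ hx
    · exact hIsub hy
  have := Finset.card_le_card hsub
  rw [Finset.card_insert_of_notMem hxI, hIcard] at this
  have h2 := (Multiset.toFinset_card_le f.roots).trans (f.card_roots' )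
  omega

lemma sum_pow_gen {F : Type} [Field F] [Fintype F] [DecidableEq F] {ω : F}
    (hω : orderOf ω = Fintype.card F - 1) (h1 : 1 < Fintype.card F) (g : F → ℤ) :
    ∑ n ∈ range (Fintype.card F - 1), g (ω ^ n) = ∑ y ∈ Finset.univ.erase 0, g y := by
  have hω0 : ω ≠ 0 := by
    intro h
    subst h
    have h2 : (0:F) ^ orderOf (0:F) = 1 := pow_orderOf_eq_one 0
    rw [zero_pow (by rw [hω]; omega)] at h2
    exact zero_ne_one h2
  refine Finset.sum_bij (fun n _ => ω ^ n) ?_ ?_ ?_ ?_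
  · intro a _
    exact Finset.mem_erase.mpr ⟨pow_ne_zero _ hω0, Finset.mem_univ _⟩
  · intro a₁ ha₁ a₂ ha₂ h
    refine pow_injOn_Iio_orderOf ?_ ?_ h <;>
      simp only [Set.mem_Iio, hω] <;> [exact Finset.mem_range.mp ha₁; exact Finset.mem_range.mp ha₂]
  · intro b hb
    have hcard : (Finset.univ.erase (0:F)).card ≤ (range (Fintype.card F - 1)).card := by
      rw [Finset.card_erase_of_mem (Finset.mem_univ _), Finset.card_univ, Finset.card_range]
    have := Finset.surj_on_of_inj_on_of_card_le (s := range (Fintype.card F - 1))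
      (t := Finset.univ.erase 0) (fun n _ => ω ^ n)
      (fun a _ => Finset.mem_erase.mpr ⟨pow_ne_zero _ hω0, Finset.mem_univ _⟩)
      (fun a₁ a₂ ha₁ ha₂ h => pow_injOn_Iio_orderOf
        (by simp only [Set.mem_Iio, hω]; exact Finset.mem_range.mp ha₁)
        (by simp only [Set.mem_Iio, hω]; exact Finset.mem_range.mp ha₂) h)
      hcard b hb
    obtain ⟨a, ha, h⟩ := this
    exact ⟨a, ha, h.symm⟩
  · intro a _; rfl



variable {p m : ℕ} [Fact p.Prime] {F : Type} [Field F] [Fintype F] [Algebra (ZMod p) F]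

lemma finrank_eq (hcard : Fintype.card F = p ^ m) : Module.finrank (ZMod p) F = m := by
  have h := card_eq_pow_finrank (K := ZMod p) (V := F)
  rw [ZMod.card, hcard] at h
  exact (Nat.pow_right_injective (Fact.out : p.Prime).two_le h.symm)

lemma natCard_ker {W : Type} [AddCommGroup W] [Module (ZMod p) W] (L : F →ₗ[ZMod p] W) :
    Nat.card (LinearMap.ker L) = p ^ (finrank (ZMod p) (LinearMap.ker L)) := by
  classical
  haveI := Fintype.ofFinite (LinearMap.ker L)
  rw [Nat.card_eq_fintype_card]
  have h3 := card_eq_pow_finrank (K := ZMod p) (V := LinearMap.ker L)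
  rw [ZMod.card] at h3
  exact h3

lemma card_trace_ker (hcard : Fintype.card F = p ^ m) (hm : 1 ≤ m) :
    Nat.card {y : F // Algebra.trace (ZMod p) F y = 0} = p ^ (m - 1) := by
  classical
  set L := Algebra.trace (ZMod p) F with hL
  have hsurj : Function.Surjective L := Algebra.trace_surjective (ZMod p) F
  have hrange : LinearMap.range L = ⊤ := LinearMap.range_eq_top.mpr hsurj
  have hrk := LinearMap.finrank_range_add_finrank_ker L
  rw [hrange, finrank_top, finrank_self, finrank_eq hcard] at hrk
  have h1 : Nat.card {y : F // L y = 0} = Nat.card (LinearMap.ker L) :=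
    Nat.card_congr (Equiv.subtypeEquivRight (fun y => by simp [LinearMap.mem_ker]))
  have h4 : finrank (ZMod p) (LinearMap.ker L) = m - 1 := by omega
  rw [h1, natCard_ker, h4]

lemma card_trace_ker2 (hcard : Fintype.card F = p ^ m) (hm : 2 ≤ m) {γ : F}
    (hγ : ∀ c : ZMod p, algebraMap (ZMod p) F c ≠ γ) :
    Nat.card {y : F // Algebra.trace (ZMod p) F y = 0 ∧ Algebra.trace (ZMod p) F (γ * y) = 0}
      = p ^ (m - 2) := by
  classical
  set L := Algebra.trace (ZMod p) F with hL
  have hsurj : Function.Surjective L := Algebra.trace_surjective (ZMod p) F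
  have hrangeL : LinearMap.range L = ⊤ := LinearMap.range_eq_top.mpr hsurj
  have hrkL := LinearMap.finrank_range_add_finrank_ker L
  rw [hrangeL, finrank_top, finrank_self, finrank_eq hcard] at hrkL
  set Φ : F →ₗ[ZMod p] (ZMod p) × (ZMod p) := LinearMap.prod L (L ∘ₗ LinearMap.mulLeft (ZMod p) γ)
    with hΦ
  have hΦapp : ∀ y : F, Φ y = (L y, L (γ * y)) := fun y => rfl
  have hkerΦ : ∀ y : F, y ∈ LinearMap.ker Φ ↔ (L y = 0 ∧ L (γ * y) = 0) := by
    intro y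
    rw [LinearMap.mem_ker, hΦapp, Prod.mk_eq_zero]
  have hrange : LinearMap.range Φ = ⊤ := by
    by_contra hne
    have hlt : LinearMap.range Φ < ⊤ := lt_top_iff_ne_top.mpr hne
    have h2 : finrank (ZMod p) (ZMod p × ZMod p) = 2 := by
      rw [Module.finrank_prod, finrank_self]
    have hfr : finrank (ZMod p) (LinearMap.range Φ) < 2 := by
      rw [← h2]; exact Submodule.finrank_lt hne
    have hrkΦ := LinearMap.finrank_range_add_finrank_ker Φ
    rw [finrank_eq hcard] at hrkΦ
    have hle : LinearMap.ker Φ ≤ LinearMap.ker L := by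
      intro y hy
      exact LinearMap.mem_ker.mpr ((hkerΦ y).mp hy).1
    have hmono := Submodule.finrank_mono hle
    have heq : LinearMap.ker Φ = LinearMap.ker L :=
      Submodule.eq_of_le_of_finrank_le hle (by omega)
    have hker : ∀ y : F, L y = 0 → L (γ * y) = 0 := by
      intro y hy
      have : y ∈ LinearMap.ker Φ := by rw [heq]; exact LinearMap.mem_ker.mpr hy
      exact ((hkerΦ y).mp this).2
    obtain ⟨x₀, hx₀⟩ := hsurj 1
    set c := L (γ * x₀) with hc
    have key : ∀ y : F, L (γ * y) = c * L y := by
      intro y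
      have h1 : L (y - L y • x₀) = 0 := by
        rw [map_sub, map_smul, hx₀, smul_eq_mul, mul_one, sub_self]
      have h2 := hker _ h1
      rw [mul_sub, mul_smul_comm, map_sub, map_smul, smul_eq_mul, sub_eq_zero] at h2
      rw [h2]; ring
    have hzero : ∀ y : F, Algebra.traceForm (ZMod p) F (γ - algebraMap (ZMod p) F c) y = 0 := by
      intro y
      rw [Algebra.traceForm_apply, sub_mul, map_sub, ← hL, key, ← Algebra.smul_def, map_smul,
        smul_eq_mul, sub_self]
    have hnd := traceForm_nondegenerate (ZMod p) F
    have := hnd.1 _ hzero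
    rw [sub_eq_zero] at this
    exact hγ c this.symm
  have hrkΦ := LinearMap.finrank_range_add_finrank_ker Φ
  rw [hrange, finrank_top, Module.finrank_prod, finrank_self, finrank_eq hcard] at hrkΦ
  have h1 : Nat.card {y : F // L y = 0 ∧ L (γ * y) = 0} = Nat.card (LinearMap.ker Φ) :=
    Nat.card_congr (Equiv.subtypeEquivRight (fun y => (hkerΦ y).symm))
  have h4 : finrank (ZMod p) (LinearMap.ker Φ) = m - 2 := by omega
  rw [h1, natCard_ker, h4]


variable (p : ℕ) [Fact p.Prime] {F : Type} [Field F] [Algebra (ZMod p) F]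

/-- The trace sequence. -/
noncomputable def xx (ω : F) (n : ℕ) : ZMod p := Algebra.trace (ZMod p) F (ω ^ n)

/-- The quadratic character of the trace sequence. -/
noncomputable def cchi (ω : F) (n : ℕ) : ℤ := quadraticChar (ZMod p) (xx p ω n)

/-- The indicator of vanishing trace. -/
noncomputable def zz (ω : F) (n : ℕ) : ℤ := if xx p ω n = 0 then 1 else 0

lemma val_cast_int (a : ZMod p) : ((a.val : ℤ) : ZMod p) = a := by
  push_cast [ZMod.natCast_val, ZMod.cast_id]; ring

lemma leg_eq (ω : F) (n : ℕ) :
    legendreSym p ((Algebra.trace (ZMod p) F (ω ^ n)).val : ℤ) = cchi p ω n := by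
  unfold legendreSym
  rw [val_cast_int]
  rfl

lemma ntuT1_eq (ω : F) (n : ℕ) :
    ntuT1 p ω n = if cchi p ω n = -1 then 1 else 0 := by
  unfold ntuT1
  rw [leg_eq]

lemma ntuT2_eq (ω : F) (n : ℕ) :
    ntuT2 p ω n = if cchi p ω n = 1 then 0 else 1 := by
  unfold ntuT2
  rw [leg_eq]

lemma cchi_zero {ω : F} {n : ℕ} (h : xx p ω n = 0) : cchi p ω n = 0 := by
  simp [cchi, h]

lemma zz_eq_one {ω : F} {n : ℕ} (h : xx p ω n = 0) : zz p ω n = 1 := by simp [zz, h]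

lemma zz_eq_zero {ω : F} {n : ℕ} (h : xx p ω n ≠ 0) : zz p ω n = 0 := by simp [zz, h]

lemma eps_T1 (ω : F) (n : ℕ) :
    (-1:ℤ)^((ntuT1 p ω n).val) = cchi p ω n + zz p ω n := by
  rw [ntuT1_eq]
  by_cases h : cchi p ω n = -1
  · have hx : xx p ω n ≠ 0 := fun h0 => by rw [cchi_zero p h0] at h; norm_num at h
    rw [if_pos h, h, zz_eq_zero p hx]
    norm_num [ZMod.val_one]
  · rw [if_neg h]
    by_cases hx : xx p ω n = 0
    · rw [cchi_zero p hx, zz_eq_one p hx]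
      norm_num [ZMod.val_zero]
    · have := quadraticChar_dichotomy (F := ZMod p) (a := xx p ω n) hx
      have h1 : cchi p ω n = 1 := by
        rcases this with h1 | h1
        · exact h1
        · exact absurd h1 h
      rw [h1, zz_eq_zero p hx]
      norm_num [ZMod.val_zero]

lemma eps_T2 (ω : F) (n : ℕ) :
    (-1:ℤ)^((ntuT2 p ω n).val) = cchi p ω n - zz p ω n := by
  rw [ntuT2_eq]
  by_cases h : cchi p ω n = 1
  · have hx : xx p ω n ≠ 0 := fun h0 => by rw [cchi_zero p h0] at h; norm_num at h
    rw [if_pos h, h, zz_eq_zero p hx]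
    norm_num [ZMod.val_zero]
  · rw [if_neg h]
    by_cases hx : xx p ω n = 0
    · rw [cchi_zero p hx, zz_eq_one p hx]
      norm_num [ZMod.val_one]
    · have := quadraticChar_dichotomy (F := ZMod p) (a := xx p ω n) hx
      have h1 : cchi p ω n = -1 := by
        rcases this with h1 | h1
        · exact absurd h1 h
        · exact h1
      rw [h1, zz_eq_zero p hx]
      norm_num [ZMod.val_one]

lemma interleave_even (t u : ℕ → ZMod 2) (e j : ℕ) : ntuInterleave t u e (2*j) = t j := by
  have h1 : (2*j) % 2 = 0 := by omega
  have h2 : (2*j) / 2 = j := by omega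
  simp [ntuInterleave, h1, h2]

lemma interleave_odd (t u : ℕ → ZMod 2) (e j : ℕ) : ntuInterleave t u e (2*j+1) = u (j + e) := by
  have h1 : (2*j+1) % 2 = 1 := by omega
  have h2 : (2*j+1) / 2 = j := by omega
  simp [ntuInterleave, h1, h2]

lemma ord_ne_zero {F : Type} [Field F] {ω : F} {n : ℕ} (hn : n ≠ 0) (hω : orderOf ω = n) :
    ω ≠ 0 := by
  intro h
  subst h
  have h2 : (0:F) ^ orderOf (0:F) = 1 := pow_orderOf_eq_one 0
  rw [zero_pow (by rw [hω]; exact hn)] at h2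
  exact zero_ne_one h2


end S16

theorem stmt16 (p m : ℕ) [Fact p.Prime] (hp2 : p ≠ 2) (hm : 1 < m)
    (F : Type) [Field F] [Fintype F] [Algebra (ZMod p) F]
    (hcard : Fintype.card F = p ^ m) (ω : F) (hω : orderOf ω = p ^ m - 1)
    (N : ℕ) (hN : N = 2 * (p ^ m - 1) / (p - 1)) (N1 N2 : ℤ)
    (hN1 : N1 = -2 * (p : ℤ) ^ (m - 1) + 2 * ((p : ℤ) ^ (m - 1) - 1) / ((p : ℤ) - 1))
    (hN2 : N2 = 2 * ((p : ℤ) ^ (m - 2) - 1) / ((p : ℤ) - 1))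
    (e1 e2 : ℕ) (he1 : e1 < N) (he2 : e2 < N) (hlt : e1 < e2)
    (hcond : (e1 : ℤ) + (e2 : ℤ) ≡ 1 - ((N / 2 : ℕ) : ℤ) [ZMOD (N : ℤ)])
    (τ0 : ℤ) (hτ0 : 0 ≤ τ0) (hτ1 : τ0 ≤ (N : ℤ) - 1) :
    pcorr (2 * N) (ntuInterleave (ntuT1 p ω) (ntuT2 p ω) e1) (ntuInterleave (ntuT1 p ω) (ntuT2 p ω) e2) (2 * τ0 + 1) =
      if τ0 ≡ -(e2 : ℤ) - ((N / 2 : ℕ) : ℤ) [ZMOD (N : ℤ)] ∨ τ0 ≡ -(e2 : ℤ) [ZMOD (N : ℤ)] then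
        -(N : ℤ) - N1
      else -2 * N2 := by
  classical
  open Finset in
  have hp : p.Prime := Fact.out
  have hp3 : 3 ≤ p := by have := hp.two_le; omega
  have hpm : 2 ≤ p ^ m := by
    calc 2 ≤ p := by omega
    _ = p^1 := (pow_one p).symm
    _ ≤ p^m := Nat.pow_le_pow_right (by omega) (by omega)
  set d : ℕ := (p ^ m - 1) / (p - 1) with hdd
  have hdvd : (p - 1) ∣ (p ^ m - 1) := by
    have h := Nat.sub_dvd_pow_sub_pow p 1 m
    rwa [one_pow] at h
  have hd : d * (p - 1) = p ^ m - 1 := Nat.div_mul_cancel hdvd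
  have hdpos : 0 < d := by
    rcases Nat.eq_zero_or_pos d with h | h
    · rw [h, Nat.zero_mul] at hd; omega
    · exact h
  have hNd : N = 2 * d := by
    rw [hN, hdd, Nat.mul_div_assoc 2 hdvd]
  have hhalf : N / 2 = d := by omega
  have hω0 : ω ≠ 0 := S16.ord_ne_zero (by omega) hω
  -- the element α = ω^d lies in the prime field
  have hωd : (ω ^ d) ^ p = ω ^ d := by
    rw [← pow_mul]
    have h1 : d * p = d + (p^m - 1) := by
      have h2 : p = (p-1) + 1 := by omega
      calc d * p = d * ((p-1)+1) := by rw [← h2]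
      _ = d * (p-1) + d := by ring
      _ = d + (p^m - 1) := by rw [hd]; omega
    rw [h1, pow_add, ← hω, pow_orderOf_eq_one, mul_one]
  obtain ⟨α, hα⟩ := S16.mem_primeField hωd
  have hα0 : α ≠ 0 := by
    intro h; rw [h, map_zero] at hα
    exact pow_ne_zero d hω0 hα.symm
  have hαord : orderOf α = p - 1 := by
    have h1 : orderOf ((algebraMap (ZMod p) F) α) = orderOf α :=
      orderOf_injective (algebraMap (ZMod p) F).toMonoidHom
        (fun _ _ h => (algebraMap (ZMod p) F).injective h) α
    rw [hα] at h1
    rw [← h1, orderOf_pow_of_dvd (by omega : d ≠ 0) (by rw [hω]; exact ⟨p-1, hd.symm⟩), hω, ← hd,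
      Nat.mul_div_cancel_left _ hdpos]
  have hχα : (quadraticChar (ZMod p) α : ℤ) = -1 := by
    refine quadraticChar_neg_one_iff_not_isSquare.mpr ?_
    rintro ⟨b, hb⟩
    have hb0 : b ≠ 0 := by rintro rfl; rw [mul_zero] at hb; exact hα0 hb
    have h1 : α ^ ((p-1)/2) = 1 := by
      have hpo : p % 2 = 1 := hp.eq_two_or_odd.resolve_left hp2
      rw [hb, ← sq, ← pow_mul]
      rw [show 2 * ((p-1)/2) = p - 1 from by omega]
      exact ZMod.pow_card_sub_one_eq_one hb0
    have h3 := orderOf_dvd_of_pow_eq_one h1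
    rw [hαord] at h3
    have h4 := Nat.le_of_dvd (by omega) h3
    omega
  -- periodicity
  have hxd : ∀ n, S16.xx p ω (n + d) = α * S16.xx p ω n := by
    intro n
    show Algebra.trace (ZMod p) F (ω ^ (n+d)) = α * Algebra.trace (ZMod p) F (ω ^ n)
    rw [pow_add, ← hα, mul_comm (ω ^ n), ← Algebra.smul_def, map_smul, smul_eq_mul]
  have hχd : ∀ n, S16.cchi p ω (n + d) = - S16.cchi p ω n := by
    intro n
    show (quadraticChar (ZMod p) (S16.xx p ω (n+d)) : ℤ) = -(quadraticChar (ZMod p) (S16.xx p ω n))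
    rw [hxd, map_mul, hχα]; ring
  have hzd : ∀ n, S16.zz p ω (n + d) = S16.zz p ω n := by
    intro n
    show (if S16.xx p ω (n+d) = 0 then (1:ℤ) else 0) = (if S16.xx p ω n = 0 then 1 else 0)
    rw [hxd]
    simp [mul_eq_zero, hα0]
  set c1 : ℕ → ℤ := fun n => S16.cchi p ω n + S16.zz p ω n with hc1def
  set c2 : ℕ → ℤ := fun n => S16.cchi p ω n - S16.zz p ω n with hc2def
  have hc1d : ∀ n, c1 (n + d) = - c2 n := by
    intro n; simp only [hc1def, hc2def]; rw [hχd, hzd]; ring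
  have hc2d : ∀ n, c2 (n + d) = - c1 n := by
    intro n; simp only [hc1def, hc2def]; rw [hχd, hzd]; ring
  have hc1N : ∀ n, c1 (n + N) = c1 n := by
    intro n; rw [hNd, two_mul, ← Nat.add_assoc, hc1d, hc2d, neg_neg]
  have hc2N : ∀ n, c2 (n + N) = c2 n := by
    intro n; rw [hNd, two_mul, ← Nat.add_assoc, hc2d, hc1d, neg_neg]
  have hχN : ∀ n, S16.cchi p ω (n + N) = S16.cchi p ω n := by
    intro n; rw [hNd, two_mul, ← Nat.add_assoc, hχd, hχd, neg_neg]
  have ht1per : ∀ n, ntuT1 p ω (n + N) = ntuT1 p ω n := by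
    intro n; rw [S16.ntuT1_eq, S16.ntuT1_eq, hχN]
  have ht2per : ∀ n, ntuT2 p ω (n + N) = ntuT2 p ω n := by
    intro n; rw [S16.ntuT2_eq, S16.ntuT2_eq, hχN]
  set s1 : ℕ → ZMod 2 := ntuInterleave (ntuT1 p ω) (ntuT2 p ω) e1 with hs1def
  set s2 : ℕ → ZMod 2 := ntuInterleave (ntuT1 p ω) (ntuT2 p ω) e2 with hs2def
  have hs2per : ∀ n, s2 (n + 2*N) = s2 n := by
    intro n
    simp only [hs2def]
    unfold ntuInterleave
    have hmod : (n + 2*N) % 2 = n % 2 := by omega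
    have hdiv : (n + 2*N) / 2 = n/2 + N := by omega
    rw [hmod, hdiv]
    by_cases h : n % 2 = 0
    · rw [if_pos h, if_pos h, ht1per]
    · rw [if_neg h, if_neg h, show n/2 + N + e2 = (n/2 + e2) + N from by omega, ht2per]
  set t0' : ℕ := τ0.toNat with ht0def
  have ht0 : (t0' : ℤ) = τ0 := Int.toNat_of_nonneg hτ0
  set a : ℕ := t0' + e2 with hadef
  set b : ℕ := t0' + 1 + (N - e1) with hbdef
  have hidx : ∀ i : ℕ, ((((i:ℤ) + (2*τ0+1)) % (((2*N : ℕ)):ℤ)).toNat) = (i + (2*t0'+1)) % (2*N) := by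
    intro i
    have h1 : (i:ℤ) + (2*τ0+1) = ((i + (2*t0'+1) : ℕ) : ℤ) := by push_cast [ht0]; ring
    rw [h1, ← Int.natCast_mod]
    omega
  have step1 : pcorr (2*N) s1 s2 (2*τ0+1)
      = ∑ i ∈ range (2*N), (-1:ℤ)^((s1 i).val) * (-1:ℤ)^((s2 (i + (2*t0'+1))).val) := by
    unfold pcorr
    refine Finset.sum_congr rfl fun i _ => ?_
    rw [hidx i, ← S16.per_mod hs2per (i + (2*t0'+1))]
    exact S16.eps_add _ _
  have step2 : ∑ i ∈ range (2*N), (-1:ℤ)^((s1 i).val) * (-1:ℤ)^((s2 (i + (2*t0'+1))).val)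
      = (∑ j ∈ range N, c1 j * c2 (j + a)) + ∑ j ∈ range N, c2 (j + e1) * c1 (j + (t0' + 1)) := by
    rw [S16.sum_even_odd (fun i => (-1:ℤ)^((s1 i).val) * (-1:ℤ)^((s2 (i + (2*t0'+1))).val)) N]
    congr 1
    · refine Finset.sum_congr rfl fun j _ => ?_
      have h1 : s1 (2*j) = ntuT1 p ω j := S16.interleave_even _ _ _ _
      have h2 : s2 (2*j + (2*t0'+1)) = ntuT2 p ω (j + a) := by
        rw [hs2def, show 2*j + (2*t0'+1) = 2*(j+t0')+1 from by ring, S16.interleave_odd]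
        congr 1
        omega
      rw [h1, h2, S16.eps_T1, S16.eps_T2]
    · refine Finset.sum_congr rfl fun j _ => ?_
      have h1 : s1 (2*j+1) = ntuT2 p ω (j + e1) := S16.interleave_odd _ _ _ _
      have h2 : s2 (2*j+1 + (2*t0'+1)) = ntuT1 p ω (j + (t0'+1)) := by
        rw [hs2def, show 2*j+1 + (2*t0'+1) = 2*(j+(t0'+1)) from by ring, S16.interleave_even]
      rw [h1, h2, S16.eps_T1, S16.eps_T2]
  have step3 : ∑ j ∈ range N, c2 (j + e1) * c1 (j + (t0' + 1))
      = ∑ j ∈ range N, c2 j * c1 (j + b) := by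
    have h1 : ∀ j, c2 (j + e1) * c1 (j + (t0'+1)) = (fun k => c2 k * c1 (k + b)) (j + e1) := by
      intro j
      show c2 (j + e1) * c1 (j + (t0'+1)) = c2 (j + e1) * c1 ((j + e1) + b)
      have h2 : (j + e1) + b = (j + (t0'+1)) + N := by omega
      rw [h2, hc1N]
    calc ∑ j ∈ range N, c2 (j + e1) * c1 (j + (t0'+1))
        = ∑ j ∈ range N, (fun k => c2 k * c1 (k + b)) (j + e1) :=
          Finset.sum_congr rfl fun j _ => h1 j
      _ = ∑ j ∈ range N, c2 j * c1 (j + b) :=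
          S16.per_sum_shift (g := fun k => c2 k * c1 (k + b)) (T := N) (fun k => by
            show c2 (k + N) * c1 ((k + N) + b) = c2 k * c1 (k + b)
            rw [hc2N, show (k + N) + b = (k + b) + N from by omega, hc1N]) e1
  have step4 : ∑ j ∈ range N, c2 j * c1 (j + b) = ∑ j ∈ range N, c1 j * c2 (j + b) := by
    have h1 : ∀ j, c2 j * c1 (j + b) = (fun k => c1 k * c2 (k + b)) (j + d) := by
      intro j
      show c2 j * c1 (j + b) = c1 (j + d) * c2 ((j + d) + b)
      rw [hc1d, show (j + d) + b = (j + b) + d from by omega, hc2d]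
      ring
    calc ∑ j ∈ range N, c2 j * c1 (j + b)
        = ∑ j ∈ range N, (fun k => c1 k * c2 (k + b)) (j + d) :=
          Finset.sum_congr rfl fun j _ => h1 j
      _ = ∑ j ∈ range N, c1 j * c2 (j + b) :=
          S16.per_sum_shift (g := fun k => c1 k * c2 (k + b)) (T := N) (fun k => by
            show c1 (k + N) * c2 ((k + N) + b) = c1 k * c2 (k + b)
            rw [hc1N, show (k + N) + b = (k + b) + N from by omega, hc2N]) d
  rw [hhalf] at hcond
  have hab : (b : ℕ) % N = (a + d) % N := by
    obtain ⟨k, hk⟩ := Int.ModEq.dvd hcond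
    have hbz : ((b:ℕ) : ℤ) = (t0':ℤ) + 1 + N - e1 := by
      rw [hbdef]; push_cast [Nat.cast_sub he1.le]; ring
    have haz : ((a + d : ℕ) : ℤ) = (t0':ℤ) + e2 + d := by push_cast [hadef]; ring
    have h3 : ((a+d:ℕ):ℤ) ≡ ((b:ℕ):ℤ) [ZMOD (N:ℤ)] := by
      refine Int.modEq_iff_dvd.mpr ⟨k + 1, ?_⟩
      rw [hbz, haz]
      linear_combination hk
    unfold Int.ModEq at h3
    rw [← Int.natCast_mod, ← Int.natCast_mod] at h3
    exact_mod_cast h3.symm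
  have hper2 : ∀ τ j, c2 (j + τ) = c2 (j + τ % N) := by
    intro τ j
    have h0 := Nat.mod_add_div τ N
    have h1 : j + τ = (j + τ % N) + (τ / N) * N := by
      calc j + τ = j + (τ % N + N * (τ / N)) := by rw [h0]
        _ = (j + τ % N) + (τ / N) * N := by ring
    rw [h1]
    exact S16.per_add_mul hc2N _ _
  have step5 : ∑ j ∈ range N, c1 j * c2 (j + b) = ∑ j ∈ range N, c1 j * c2 (j + (a + d)) := by
    calc ∑ j ∈ range N, c1 j * c2 (j + b)
        = ∑ j ∈ range N, c1 j * c2 (j + b % N) :=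
          Finset.sum_congr rfl fun j _ => by rw [hper2 b j]
      _ = ∑ j ∈ range N, c1 j * c2 (j + (a+d) % N) := by rw [hab]
      _ = ∑ j ∈ range N, c1 j * c2 (j + (a+d)) :=
          Finset.sum_congr rfl fun j _ => by rw [← hper2 (a+d) j]
  have step6 : (∑ j ∈ range N, c1 j * c2 (j + a)) + ∑ j ∈ range N, c1 j * c2 (j + (a+d))
      = -2 * ∑ j ∈ range N, (S16.cchi p ω j + S16.zz p ω j) * S16.zz p ω (j + a) := by
    rw [← Finset.sum_add_distrib, Finset.mul_sum]
    refine Finset.sum_congr rfl fun j _ => ?_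
    rw [show j + (a + d) = (j + a) + d from by omega, hc2d]
    simp only [hc1def, hc2def]
    ring
  have hR : pcorr (2*N) s1 s2 (2*τ0+1)
      = -2 * ∑ j ∈ range N, (S16.cchi p ω j + S16.zz p ω j) * S16.zz p ω (j + a) := by
    rw [step1, step2, step3, step4, step5, step6]
  rw [hR]
  have hNz : (N:ℤ) = 2 * (d:ℤ) := by rw [hNd]; push_cast; ring
  have hCiff : (τ0 ≡ -(e2 : ℤ) - ((N / 2 : ℕ) : ℤ) [ZMOD (N : ℤ)] ∨ τ0 ≡ -(e2:ℤ) [ZMOD (N:ℤ)])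
      ↔ d ∣ a := by
    rw [hhalf]
    have haz : (a:ℤ) = τ0 + e2 := by rw [hadef]; push_cast [ht0]; ring
    constructor
    · rintro (h | h)
      · obtain ⟨k, hk⟩ := Int.ModEq.dvd h
        have h5 : (a:ℤ) = (d:ℤ) * (-1 - 2*k) := by
          rw [hNz] at hk; linear_combination haz - hk
        exact Int.natCast_dvd_natCast.mp ⟨-1-2*k, h5⟩
      · obtain ⟨k, hk⟩ := Int.ModEq.dvd h
        have h5 : (a:ℤ) = (d:ℤ) * (-2*k) := by
          rw [hNz] at hk; linear_combination haz - hk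
        exact Int.natCast_dvd_natCast.mp ⟨-2*k, h5⟩
    · rintro ⟨k, hk⟩
      have hkz : (a:ℤ) = (d:ℤ) * (k:ℤ) := by exact_mod_cast hk
      rcases Nat.even_or_odd k with ⟨t, ht⟩ | ⟨t, ht⟩
      · right
        refine Int.modEq_iff_dvd.mpr ⟨-(t:ℤ), ?_⟩
        have htz : (k:ℤ) = t + t := by exact_mod_cast ht
        calc -(e2:ℤ) - τ0 = -(a:ℤ) := by linarith [haz]
          _ = -((d:ℤ)*(k:ℤ)) := by rw [hkz]
          _ = (N:ℤ) * (-(t:ℤ)) := by rw [htz, hNz]; ring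
      · left
        refine Int.modEq_iff_dvd.mpr ⟨-(t:ℤ) - 1, ?_⟩
        have htz : (k:ℤ) = 2*t + 1 := by exact_mod_cast ht
        calc -(e2:ℤ) - (d:ℤ) - τ0 = -(a:ℤ) - (d:ℤ) := by linarith [haz]
          _ = -((d:ℤ)*(k:ℤ)) - (d:ℤ) := by rw [hkz]
          _ = (N:ℤ) * (-(t:ℤ) - 1) := by rw [htz, hNz]; ring
  have hzfull : ∑ n ∈ range (p^m - 1), S16.zz p ω n = (p:ℤ)^(m-1) - 1 := by
    have hω' : orderOf ω = Fintype.card F - 1 := by rw [hω, hcard]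
    have hcgt : 1 < Fintype.card F := by rw [hcard]; omega
    calc ∑ n ∈ range (p^m - 1), S16.zz p ω n
        = ∑ n ∈ range (Fintype.card F - 1),
            (fun y : F => if Algebra.trace (ZMod p) F y = 0 then (1:ℤ) else 0) (ω ^ n) := by
          rw [hcard]
          exact Finset.sum_congr rfl fun n _ => rfl
      _ = ∑ y ∈ Finset.univ.erase 0,
            (fun y : F => if Algebra.trace (ZMod p) F y = 0 then (1:ℤ) else 0) y :=
          S16.sum_pow_gen hω' hcgt (fun y : F => if Algebra.trace (ZMod p) F y = 0 then (1:ℤ) else 0)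
      _ = (p:ℤ)^(m-1) - 1 := by
          have h2 : (∑ y ∈ Finset.univ.erase 0,
                (fun y : F => if Algebra.trace (ZMod p) F y = 0 then (1:ℤ) else 0) y)
                + (if Algebra.trace (ZMod p) F (0:F) = 0 then (1:ℤ) else 0)
              = ∑ y : F, (if Algebra.trace (ZMod p) F y = 0 then (1:ℤ) else 0) :=
            Finset.sum_erase_add Finset.univ
              (fun y : F => if Algebra.trace (ZMod p) F y = 0 then (1:ℤ) else 0) (Finset.mem_univ 0)
          have h3 : (if Algebra.trace (ZMod p) F (0:F) = 0 then (1:ℤ) else 0) = 1 := by simp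
          have h4 : ∑ y : F, (if Algebra.trace (ZMod p) F y = 0 then (1:ℤ) else 0)
              = ((Finset.univ.filter (fun y : F => Algebra.trace (ZMod p) F y = 0)).card : ℤ) := by
            rw [Finset.sum_boole]
          have h5 : (Finset.univ.filter (fun y : F => Algebra.trace (ZMod p) F y = 0)).card
              = p^(m-1) := by
            rw [← Fintype.card_subtype, ← Nat.card_eq_fintype_card]
            exact S16.card_trace_ker hcard (by omega)
          rw [h3, h4, h5] at h2
          push_cast at h2 ⊢
          linarith
  by_cases hC : (τ0 ≡ -(e2 : ℤ) - ((N / 2 : ℕ) : ℤ) [ZMOD (N : ℤ)] ∨ τ0 ≡ -(e2:ℤ) [ZMOD (N:ℤ)])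
  · rw [if_pos hC]
    obtain ⟨k, hk⟩ := hCiff.mp hC
    have hza : ∀ j, S16.zz p ω (j + a) = S16.zz p ω j := by
      intro j; rw [hk, show j + d * k = j + k * d from by ring]
      exact S16.per_add_mul hzd j k
    have hpt : ∀ j, (S16.cchi p ω j + S16.zz p ω j) * S16.zz p ω (j + a) = S16.zz p ω j := by
      intro j; rw [hza]
      by_cases h : S16.xx p ω j = 0
      · rw [S16.cchi_zero p h, S16.zz_eq_one p h]; ring
      · rw [S16.zz_eq_zero p h]; ring
    rw [Finset.sum_congr rfl fun j _ => hpt j]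
    have hsplit : ∑ j ∈ range N, S16.zz p ω j = 2 * ∑ j ∈ range d, S16.zz p ω j := by
      rw [hNd, two_mul, Finset.sum_range_add]
      have h6 : ∀ i, S16.zz p ω (d + i) = S16.zz p ω i := fun i => by
        rw [Nat.add_comm]; exact hzd i
      rw [Finset.sum_congr rfl fun i _ => h6 i]
      ring
    have hper : ((p:ℤ) - 1) * ∑ j ∈ range d, S16.zz p ω j = (p:ℤ)^(m-1) - 1 := by
      have h1 := S16.per_sum_mul hzd (p-1)
      rw [show (p-1) * d = p^m - 1 from by rw [Nat.mul_comm]; exact hd, hzfull] at h1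
      have h2 : ((p-1 : ℕ) : ℤ) = (p:ℤ) - 1 := by
        push_cast [Nat.cast_sub (show 1 ≤ p by omega)]; ring
      rw [h2] at h1
      linarith
    rw [hsplit]
    set S₁ := ∑ j ∈ range d, S16.zz p ω j with hS1def
    have hc0 : ((p:ℤ) - 1) ≠ 0 := by
      have : (3:ℤ) ≤ (p:ℤ) := by exact_mod_cast hp3
      linarith
    have hN1val : N1 = -2*(p:ℤ)^(m-1) + 2 * S₁ := by
      rw [hN1]
      congr 1
      rw [show (2:ℤ) * ((p:ℤ)^(m-1) - 1) = ((p:ℤ)-1) * (2 * S₁) from by rw [← hper]; ring,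
        Int.mul_ediv_cancel_left _ hc0]
    have hdZ : ((p:ℤ) - 1) * (d:ℤ) = (p:ℤ)^m - 1 := by
      have h01 : 1 ≤ p ^ m := by omega
      zify [h01, show 1 ≤ p from by omega] at hd
      linear_combination hd
    have hpow : (p:ℤ)^m = (p:ℤ)^(m-1) * p := by
      rw [← pow_succ]
      congr 1
      omega
    have hdval : (d:ℤ) = (p:ℤ)^(m-1) + S₁ := by
      apply mul_left_cancel₀ hc0
      rw [hdZ, mul_add, hper]
      linear_combination hpow
    rw [hN1val, hNz, hdval]
    ring
  · rw [if_neg hC]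
    have hnda : ¬ d ∣ a := fun h => hC (hCiff.mpr h)
    have hγ : ∀ c : ZMod p, algebraMap (ZMod p) F c ≠ ω ^ a := by
      intro c hcc
      have hc0' : c ≠ 0 := by
        rintro rfl
        rw [map_zero] at hcc
        exact pow_ne_zero a hω0 hcc.symm
      have h1 : ω ^ (a * (p-1)) = 1 := by
        rw [pow_mul, ← hcc, ← map_pow, ZMod.pow_card_sub_one_eq_one hc0', map_one]
      have h3 := orderOf_dvd_of_pow_eq_one h1
      rw [hω, ← hd] at h3
      obtain ⟨k, hk⟩ := h3
      refine hnda ⟨k, ?_⟩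
      have hp1 : 0 < p - 1 := by omega
      apply Nat.eq_of_mul_eq_mul_right hp1
      rw [hk]
      ring
    have hzzfull : ∑ n ∈ range (p^m - 1), S16.zz p ω n * S16.zz p ω (n + a)
        = (p:ℤ)^(m-2) - 1 := by
      have hω' : orderOf ω = Fintype.card F - 1 := by rw [hω, hcard]
      have hcgt : 1 < Fintype.card F := by rw [hcard]; omega
      have h1 : ∀ n : ℕ, S16.zz p ω n * S16.zz p ω (n + a)
          = (fun y : F => if (Algebra.trace (ZMod p) F y = 0 ∧
              Algebra.trace (ZMod p) F (ω^a * y) = 0) then (1:ℤ) else 0) (ω ^ n) := by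
        intro n
        have hxa : Algebra.trace (ZMod p) F (ω^(n+a)) = Algebra.trace (ZMod p) F (ω^a * ω^n) := by
          rw [pow_add, mul_comm]
        simp only [S16.zz, S16.xx, hxa]
        by_cases hA : Algebra.trace (ZMod p) F (ω^n) = 0 <;>
          by_cases hB : Algebra.trace (ZMod p) F (ω^a * ω^n) = 0 <;>
          simp [hA, hB]
      calc ∑ n ∈ range (p^m - 1), S16.zz p ω n * S16.zz p ω (n + a)
          = ∑ n ∈ range (Fintype.card F - 1),
              (fun y : F => if (Algebra.trace (ZMod p) F y = 0 ∧
                Algebra.trace (ZMod p) F (ω^a * y) = 0) then (1:ℤ) else 0) (ω ^ n) := by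
            rw [hcard]
            exact Finset.sum_congr rfl fun n _ => h1 n
        _ = ∑ y ∈ Finset.univ.erase 0,
              (fun y : F => if (Algebra.trace (ZMod p) F y = 0 ∧
                Algebra.trace (ZMod p) F (ω^a * y) = 0) then (1:ℤ) else 0) y :=
            S16.sum_pow_gen hω' hcgt (fun y : F => if (Algebra.trace (ZMod p) F y = 0 ∧
              Algebra.trace (ZMod p) F (ω^a * y) = 0) then (1:ℤ) else 0)
        _ = (p:ℤ)^(m-2) - 1 := by
            have h2 : (∑ y ∈ Finset.univ.erase 0,
                  (fun y : F => if (Algebra.trace (ZMod p) F y = 0 ∧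
                    Algebra.trace (ZMod p) F (ω^a * y) = 0) then (1:ℤ) else 0) y)
                  + (if (Algebra.trace (ZMod p) F (0:F) = 0 ∧
                    Algebra.trace (ZMod p) F (ω^a * (0:F)) = 0) then (1:ℤ) else 0)
                = ∑ y : F, (if (Algebra.trace (ZMod p) F y = 0 ∧
                    Algebra.trace (ZMod p) F (ω^a * y) = 0) then (1:ℤ) else 0) :=
              Finset.sum_erase_add Finset.univ
                (fun y : F => if (Algebra.trace (ZMod p) F y = 0 ∧
                  Algebra.trace (ZMod p) F (ω^a * y) = 0) then (1:ℤ) else 0) (Finset.mem_univ 0)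
            have h3 : (if (Algebra.trace (ZMod p) F (0:F) = 0 ∧
                Algebra.trace (ZMod p) F (ω^a * (0:F)) = 0) then (1:ℤ) else 0) = 1 := by simp
            have h4 : ∑ y : F, (if (Algebra.trace (ZMod p) F y = 0 ∧
                Algebra.trace (ZMod p) F (ω^a * y) = 0) then (1:ℤ) else 0)
                = ((Finset.univ.filter (fun y : F => Algebra.trace (ZMod p) F y = 0 ∧
                    Algebra.trace (ZMod p) F (ω^a * y) = 0)).card : ℤ) := by
              rw [Finset.sum_boole]
            have h5 : (Finset.univ.filter (fun y : F => Algebra.trace (ZMod p) F y = 0 ∧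
                Algebra.trace (ZMod p) F (ω^a * y) = 0)).card = p^(m-2) := by
              rw [← Fintype.card_subtype, ← Nat.card_eq_fintype_card]
              exact S16.card_trace_ker2 hcard (by omega) hγ
            rw [h3, h4, h5] at h2
            push_cast at h2 ⊢
            linarith
    have hsplit : ∑ j ∈ range N, (S16.cchi p ω j + S16.zz p ω j) * S16.zz p ω (j + a)
        = 2 * ∑ j ∈ range d, S16.zz p ω j * S16.zz p ω (j + a) := by
      rw [hNd, two_mul, Finset.sum_range_add]
      have h6 : ∀ i, (S16.cchi p ω (d + i) + S16.zz p ω (d + i)) * S16.zz p ω (d + i + a)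
          = (- S16.cchi p ω i + S16.zz p ω i) * S16.zz p ω (i + a) := by
        intro i
        rw [show d + i = i + d from by ring, hχd, hzd,
          show i + d + a = (i + a) + d from by ring, hzd]
      rw [Finset.sum_congr rfl fun i _ => h6 i, ← Finset.sum_add_distrib, Finset.mul_sum]
      refine Finset.sum_congr rfl fun j _ => ?_
      ring
    have hper : ((p:ℤ) - 1) * ∑ j ∈ range d, S16.zz p ω j * S16.zz p ω (j + a)
        = (p:ℤ)^(m-2) - 1 := by
      have hgper : ∀ n, S16.zz p ω (n + d) * S16.zz p ω ((n + d) + a)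
          = S16.zz p ω n * S16.zz p ω (n + a) := by
        intro n
        rw [hzd, show (n + d) + a = (n + a) + d from by ring, hzd]
      have h1 := S16.per_sum_mul (g := fun n => S16.zz p ω n * S16.zz p ω (n + a)) hgper (p-1)
      rw [show (p-1) * d = p^m - 1 from by rw [Nat.mul_comm]; exact hd, hzzfull] at h1
      have h2 : ((p-1 : ℕ) : ℤ) = (p:ℤ) - 1 := by
        push_cast [Nat.cast_sub (show 1 ≤ p by omega)]; ring
      rw [h2] at h1
      linarith
    rw [hsplit]
    set S₂ := ∑ j ∈ range d, S16.zz p ω j * S16.zz p ω (j + a) with hS2def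
    have hc0 : ((p:ℤ) - 1) ≠ 0 := by
      have : (3:ℤ) ≤ (p:ℤ) := by exact_mod_cast hp3
      linarith
    have hN2val : N2 = 2 * S₂ := by
      rw [hN2]
      rw [show (2:ℤ) * ((p:ℤ)^(m-2) - 1) = ((p:ℤ)-1) * (2 * S₂) from by rw [← hper]; ring,
        Int.mul_ediv_cancel_left _ hc0]
    rw [hN2val]
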